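/- Let P be a naturally labeled partial order on {1,2,…,m}. Then for every integer 1 ≤ k ≤ m, the coefficient of x^k in F_P(q,x) is a nonzero polynomial in q whose largest exponent with nonzero coefficient is m(m−1)/2 + k; that is, q_max([x^k]F_P(q,x)) = m(m−1)/2 + k. -/

import Mathlib

open Finset Polynomial LaurentPolynomial

attribute [local instance] Classical.propDecidable

/-- The value `π_i` of the word of `π` at the 1-based position `i` (values in `{1, …, m}`). -/
def wordAt (m : ℕ) (π : Equiv.Perm (Fin m)) (i : ℕ) : ℕ :=
  if h : i - 1 < m then ((π ⟨i - 1, h⟩ : Fin m) : ℕ) + 1 else 0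

/-- The descent set `Des(π) ⊆ {1, …, m-1}` (1-based positions). -/
def DesSet (m : ℕ) (π : Equiv.Perm (Fin m)) : Finset ℕ :=
  (Finset.Ico 1 m).filter fun i => wordAt m π (i + 1) < wordAt m π i

/-- The number of descents `des(π)`. -/
def desNum (m : ℕ) (π : Equiv.Perm (Fin m)) : ℕ := (DesSet m π).card

/-- The major index `maj(π)`. -/
def majIdx (m : ℕ) (π : Equiv.Perm (Fin m)) : ℕ := ∑ i ∈ DesSet m π, i

/-- The partial order `P` on `{1,…,m}` (encoded as `Fin m`) is naturally labeled:
`x ≤_P y` implies `x ≤ y` as integers. -/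
def NatLabeled (m : ℕ) (P : PartialOrder (Fin m)) : Prop :=
  ∀ x y : Fin m, P.le x y → x ≤ y

/-- `π` is a linear extension of `P`: `π_i ≤_P π_j` implies `i ≤ j`. -/
def IsLinExt (m : ℕ) (P : PartialOrder (Fin m)) (π : Equiv.Perm (Fin m)) : Prop :=
  ∀ i j : Fin m, P.le (π i) (π j) → i ≤ j

/-- `mc(x)`: the maximum number of elements of a chain of `P` whose largest element is `x`. -/
noncomputable def mc (m : ℕ) (P : PartialOrder (Fin m)) (x : Fin m) : ℕ :=
  sSup {k : ℕ | ∃ s : Finset (Fin m),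
    s.card = k ∧ IsChain P.le ↑s ∧ x ∈ s ∧ ∀ y ∈ s, P.le y x}

/-- `m̄c(x)`: the maximum number of elements of a chain of `P` whose smallest element is `x`. -/
noncomputable def mcUp (m : ℕ) (P : PartialOrder (Fin m)) (x : Fin m) : ℕ :=
  sSup {k : ℕ | ∃ s : Finset (Fin m),
    s.card = k ∧ IsChain P.le ↑s ∧ x ∈ s ∧ ∀ y ∈ s, P.le x y}

/-- The `q`-integer `[n]_q` for `n ∈ ℤ`, as a Laurent polynomial:
`[n]_q = 1 + q + ⋯ + q^{n-1}` for `n ≥ 0` and `[-n]_q = -q^{-n} [n]_q`. -/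
noncomputable def qInt (n : ℤ) : LaurentPolynomial ℤ :=
  if 0 ≤ n then ∑ i ∈ Finset.range n.toNat, T (i : ℤ)
  else -(T n * ∑ i ∈ Finset.range (-n).toNat, T (i : ℤ))

/-- The polynomial `F_P(q,x) = Σ_{π ∈ L(P)} q^{maj π} Π_{i=1}^m ([i - des π]_q + q^{i - des π} x)`,
an element of `(ℤ[q,q⁻¹])[x]` (it in fact lies in `ℤ[q,x]`). -/
noncomputable def Fpoly (m : ℕ) (P : PartialOrder (Fin m)) : Polynomial (LaurentPolynomial ℤ) :=
  ∑ π ∈ Finset.univ.filter (fun π => IsLinExt m P π),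
    Polynomial.C (T (majIdx m π : ℤ)) *
      ∏ i ∈ Finset.Icc 1 m,
        (Polynomial.C (qInt ((i : ℤ) - desNum m π)) +
          Polynomial.C (T ((i : ℤ) - desNum m π)) * Polynomial.X)

/-- The Newton polygon of an element of `(ℤ[q,q⁻¹])[x]`, in the `(q,x)`-plane. -/
noncomputable def NTL (f : Polynomial (LaurentPolynomial ℤ)) : Set (ℝ × ℝ) :=
  convexHull ℝ {p : ℝ × ℝ | ∃ (i : ℤ) (k : ℕ), (f.coeff k).coeff i ≠ 0 ∧ p = ((i : ℝ), (k : ℝ))}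

/-- The Newton polygon of an element of `ℤ[q][x]`, in the `(q,x)`-plane. -/
noncomputable def NTP (f : Polynomial (Polynomial ℤ)) : Set (ℝ × ℝ) :=
  convexHull ℝ {p : ℝ × ℝ | ∃ (i k : ℕ), (f.coeff k).coeff i ≠ 0 ∧ p = ((i : ℝ), (k : ℝ))}

/-- The polygon `C(a_1,…,a_m;h)`: the convex hull of `(0,0)`, `(a_1+⋯+a_i, i)` for
`1 ≤ i ≤ m`, `(h,m)` and `(h-m,0)`. -/
noncomputable def Cpolygon (m : ℕ) (a : ℕ → ℕ) (h : ℕ) : Set (ℝ × ℝ) :=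
  convexHull ℝ ({((0 : ℝ), (0 : ℝ)), ((h : ℝ), (m : ℝ)), ((h : ℝ) - (m : ℝ), (0 : ℝ))} ∪
    {p : ℝ × ℝ | ∃ i ∈ Finset.Icc 1 m, p = ((∑ j ∈ Finset.Icc 1 i, (a j : ℝ)), (i : ℝ))})

/-- The index of the descent block of `π` containing the 1-based position `j`. -/
def blockIdx (m : ℕ) (π : Equiv.Perm (Fin m)) (j : ℕ) : ℕ :=
  1 + ((Finset.Ico 1 j).filter (fun i => i ∉ DesSet m π)).card

/-- `DB_i(π)`: the set of entries of the `i`-th descent block of `π`. -/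
def DB (m : ℕ) (π : Equiv.Perm (Fin m)) (i : ℕ) : Finset (Fin m) :=
  Finset.univ.filter fun x => blockIdx m π (((π.symm x : Fin m) : ℕ) + 1) = i

/-- `PP(P,n)`: the set of `P`-partitions (order-reversing maps) with all parts at most `n`,
encoded as functions `Fin m → Fin (n+1)`. -/
noncomputable def PPset (m : ℕ) (P : PartialOrder (Fin m)) (n : ℕ) :
    Finset (Fin m → Fin (n + 1)) :=
  Finset.univ.filter fun σ => ∀ x y : Fin m, P.le x y → σ y ≤ σ x

/-- `|σ| = σ(1) + ⋯ + σ(m)`. -/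
def sizePP (m n : ℕ) (σ : Fin m → Fin (n + 1)) : ℕ := ∑ i : Fin m, (σ i : ℕ)

/-- The `q`-integer `[n]_q` for `n ∈ ℕ`, as an ordinary polynomial in `q`. -/
noncomputable def qIntP (n : ℕ) : Polynomial ℤ := ∑ i ∈ Finset.range n, Polynomial.X ^ i

/-- The `q`-factorial `[n]_q!`. -/
noncomputable def qFact (n : ℕ) : Polynomial ℤ := ∏ i ∈ Finset.Icc 1 n, qIntP i

/-- The dual poset `P̄` : `x ≤_{P̄} y` iff `y ≤_P x`. -/
def dualP (m : ℕ) (P : PartialOrder (Fin m)) : PartialOrder (Fin m) where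
  le x y := P.le y x
  lt x y := P.lt y x
  le_refl x := P.le_refl x
  le_trans a b c h1 h2 := P.le_trans c b a h2 h1
  le_antisymm a b h1 h2 := P.le_antisymm a b h2 h1
  lt_iff_le_not_ge a b := P.lt_iff_le_not_ge b a

/-- The canonical ring map `ℤ[q] → ℚ(q)`. -/
noncomputable def toRF : Polynomial ℤ →+* RatFunc ℚ :=
  (algebraMap (Polynomial ℚ) (RatFunc ℚ)).comp (Polynomial.mapRingHom (Int.castRingHom ℚ))

/-- `W(n·O(P), q) = Σ_σ q^{|σ|}`, the sum being over all order-preserving maps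
`σ : P → {0,…,n}`. -/
noncomputable def Wpoly (m : ℕ) (P : PartialOrder (Fin m)) (n : ℕ) : Polynomial ℤ :=
  ∑ σ ∈ (Finset.univ.filter fun σ : Fin m → Fin (n + 1) =>
      ∀ x y : Fin m, P.le x y → σ x ≤ σ y),
    Polynomial.X ^ (∑ i : Fin m, (σ i : ℕ))

/-- The polynomial `q^{mj - s(s-1)/2} Π_{i=1}^{s-1} (x - [i]_q) Π_{i=1}^{m-s} (q^i x + [i]_q)`. -/
noncomputable def tSummand (m s mj : ℕ) : Polynomial (LaurentPolynomial ℤ) :=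
  Polynomial.C (T ((mj : ℤ) - (s * (s - 1) / 2 : ℕ))) *
    (∏ i ∈ Finset.Icc 1 (s - 1), (Polynomial.X - Polynomial.C (qInt (i : ℤ)))) *
    ∏ i ∈ Finset.Icc 1 (m - s),
      (Polynomial.C (T (i : ℤ)) * Polynomial.X + Polynomial.C (qInt (i : ℤ)))

/-- `t(π,k)`: the coefficient of `x^{k-1}` in
`q^{maj π - s(s-1)/2} Π_{i=1}^{s-1} (x - [i]_q) Π_{i=1}^{m-s} (q^i x + [i]_q)`,
where `s = des π`. -/
noncomputable def tpoly (m : ℕ) (π : Equiv.Perm (Fin m)) (k : ℕ) : LaurentPolynomial ℤ :=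
  (tSummand m (desNum m π) (majIdx m π)).coeff (k - 1)

/-- The polynomial `A(q,x) = Π_{i=1}^m (q^i x + [i]_q)`. -/
noncomputable def Apoly (m : ℕ) : Polynomial (LaurentPolynomial ℤ) :=
  ∏ i ∈ Finset.Icc 1 m,
    (Polynomial.C (T (i : ℤ)) * Polynomial.X + Polynomial.C (qInt (i : ℤ)))

/-- The polynomial `B(q,x) = x Σ_{π ∈ L(P), des π ≥ 1} q^{maj π - s(s-1)/2}
Π_{i=1}^{s-1} (x - [i]_q) Π_{i=1}^{m-s} (q^i x + [i]_q)`, where `s = des π`;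
one has `F_P(q,x) = A(q,x) + B(q,x)`. -/
noncomputable def Bpoly (m : ℕ) (P : PartialOrder (Fin m)) : Polynomial (LaurentPolynomial ℤ) :=
  Polynomial.X *
    ∑ π ∈ Finset.univ.filter (fun π => IsLinExt m P π ∧ 1 ≤ desNum m π),
      tSummand m (desNum m π) (majIdx m π)


/-- `f` has all exponents `≤ d`. -/
def LBdd (f : LaurentPolynomial ℤ) (d : ℤ) : Prop := ∀ i : ℤ, d < i → f.coeff i = 0

lemma LBdd.zero (d : ℤ) : LBdd 0 d := fun i _ => rfl

lemma LBdd.T (n : ℤ) : LBdd (T n) n := by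
  intro i hi
  rw [T_apply, if_neg (by omega)]

lemma LBdd.neg {f : LaurentPolynomial ℤ} {d : ℤ} (hf : LBdd f d) : LBdd (-f) d := by
  intro i hi
  rw [AddMonoidAlgebra.coeff_neg, Finsupp.neg_apply, hf i hi, neg_zero]

lemma LBdd.mono {f : LaurentPolynomial ℤ} {d e : ℤ} (hf : LBdd f d) (h : d ≤ e) : LBdd f e :=
  fun i hi => hf i (lt_of_le_of_lt h hi)

lemma LBdd.mul {f g : LaurentPolynomial ℤ} {d e : ℤ} (hf : LBdd f d) (hg : LBdd g e) :
    LBdd (f * g) (d + e) := by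
  intro i hi
  rw [AddMonoidAlgebra.coeff_mul, Finsupp.sum]
  refine Finset.sum_eq_zero fun a ha => ?_
  rw [Finsupp.sum]
  refine Finset.sum_eq_zero fun b hb => ?_
  have ha' : a ≤ d := le_of_not_gt fun h' => Finsupp.mem_support_iff.mp ha (hf a h')
  have hb' : b ≤ e := le_of_not_gt fun h' => Finsupp.mem_support_iff.mp hb (hg b h')
  rw [if_neg (by omega)]

lemma mul_apply_top {f g : LaurentPolynomial ℤ} {d e : ℤ} (hf : LBdd f d) (hg : LBdd g e) :
    (f * g).coeff (d + e) = f.coeff d * g.coeff e := by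
  rw [AddMonoidAlgebra.coeff_mul, Finsupp.sum]
  rw [Finset.sum_eq_single d]
  · rw [Finsupp.sum, Finset.sum_eq_single e]
    · rw [if_pos rfl]
    · intro b _ hbe
      rw [if_neg (by omega)]
    · intro h
      rw [Finsupp.notMem_support_iff.mp h, if_pos rfl, mul_zero]
  · intro a ha had
    have ha' : a ≤ d := le_of_not_gt fun h' => Finsupp.mem_support_iff.mp ha (hf a h')
    rw [Finsupp.sum]
    refine Finset.sum_eq_zero fun b hb => ?_
    have hb' : b ≤ e := le_of_not_gt fun h' => Finsupp.mem_support_iff.mp hb (hg b h')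
    rw [if_neg (by omega)]
  · intro h
    rw [Finsupp.sum]
    refine Finset.sum_eq_zero fun b _ => ?_
    rw [Finsupp.notMem_support_iff.mp h, zero_mul, ite_self]

lemma LBdd.one : LBdd 1 0 := by
  have h1 : (1 : LaurentPolynomial ℤ) = LaurentPolynomial.T 0 := (T_zero).symm
  rw [h1]; exact LBdd.T 0

lemma LBdd.prod {ι : Type*} (s : Finset ι) (f : ι → LaurentPolynomial ℤ) (d : ι → ℤ)
    (h : ∀ i ∈ s, LBdd (f i) (d i)) : LBdd (∏ i ∈ s, f i) (∑ i ∈ s, d i) := by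
  induction s using Finset.cons_induction with
  | empty => simpa using LBdd.one
  | cons a s ha ih =>
    rw [Finset.prod_cons, Finset.sum_cons]
    exact (h a (Finset.mem_cons_self a s)).mul (ih fun i hi => h i (Finset.mem_cons.mpr (Or.inr hi)))

lemma prod_apply_top {ι : Type*} (s : Finset ι) (f : ι → LaurentPolynomial ℤ) (d : ι → ℤ)
    (h : ∀ i ∈ s, LBdd (f i) (d i)) :
    (∏ i ∈ s, f i).coeff (∑ i ∈ s, d i) = ∏ i ∈ s, (f i).coeff (d i) := by
  induction s using Finset.cons_induction with
  | empty =>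
    simp only [Finset.prod_empty, Finset.sum_empty]
    rw [show (1 : LaurentPolynomial ℤ) = LaurentPolynomial.T 0 from (T_zero).symm, T_apply,
      if_pos rfl]
  | cons a s ha ih =>
    rw [Finset.prod_cons, Finset.sum_cons, Finset.prod_cons,
      mul_apply_top (h a (Finset.mem_cons_self a s))
        (LBdd.prod s f d fun i hi => h i (Finset.mem_cons.mpr (Or.inr hi))),
      ih fun i hi => h i (Finset.mem_cons.mpr (Or.inr hi))]

lemma LBdd.finsum {ι : Type*} (s : Finset ι) (f : ι → LaurentPolynomial ℤ) (d : ℤ)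
    (h : ∀ i ∈ s, LBdd (f i) d) : LBdd (∑ i ∈ s, f i) d := by
  intro j hj
  rw [AddMonoidAlgebra.coeff_sum, Finsupp.finset_sum_apply]
  exact Finset.sum_eq_zero fun i hi => h i hi j hj

lemma T_sum {ι : Type*} (s : Finset ι) (e : ι → ℤ) :
    (T (∑ i ∈ s, e i) : LaurentPolynomial ℤ) = ∏ i ∈ s, T (e i) := by
  induction s using Finset.cons_induction with
  | empty => simp
  | cons a s ha ih => rw [Finset.sum_cons, Finset.prod_cons, T_add, ih]

lemma LBdd.mul_le {f g : LaurentPolynomial ℤ} {d e c : ℤ} (hf : LBdd f d) (hg : LBdd g e)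
    (h : d + e ≤ c) : LBdd (f * g) c := (hf.mul hg).mono h

lemma qInt_apply_nonneg (n : ℤ) (hn : 0 ≤ n) (j : ℤ) :
    (qInt n).coeff j = if 0 ≤ j ∧ j < n then 1 else 0 := by
  rw [qInt, if_pos hn, AddMonoidAlgebra.coeff_sum, Finsupp.finset_sum_apply]
  simp only [T_apply]
  by_cases h : 0 ≤ j ∧ j < n
  · rw [if_pos h, Finset.sum_eq_single j.toNat]
    · rw [if_pos (by omega)]
    · intro b _ hbj; rw [if_neg (by omega)]
    · intro h'; exact absurd (Finset.mem_range.mpr (by omega)) h'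
  · rw [if_neg h]
    refine Finset.sum_eq_zero fun b hb => ?_
    rw [Finset.mem_range] at hb
    rw [if_neg (by omega)]

lemma qInt_zero : qInt 0 = 0 := by
  rw [qInt, if_pos le_rfl]; simp

/-- The normalized factor `c_e = q^{-e} [e]_q`. -/
noncomputable def cLaur (e : ℤ) : LaurentPolynomial ℤ := T (-e) * qInt e

lemma cLaur_zero : cLaur 0 = 0 := by rw [cLaur, qInt_zero, mul_zero]

lemma LBdd_qInt (n : ℤ) (hn : 0 ≤ n) : LBdd (qInt n) (n - 1) := by
  intro j hj
  rw [qInt_apply_nonneg n hn, if_neg (by omega)]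

lemma cLaur_bdd_pos (e : ℤ) (he : 0 < e) : LBdd (cLaur e) (-1) := by
  have := (LBdd.T (-e)).mul (LBdd_qInt e he.le)
  rw [show (-e) + (e - 1) = (-1 : ℤ) by ring] at this
  exact this

lemma cLaur_top_pos (e : ℤ) (he : 0 < e) : (cLaur e).coeff (-1) = 1 := by
  have := mul_apply_top (LBdd.T (-e)) (LBdd_qInt e he.le)
  rw [show (-e) + (e - 1) = (-1 : ℤ) by ring] at this
  rw [cLaur, this, T_apply, if_pos rfl, qInt_apply_nonneg e he.le, if_pos (by omega), one_mul]

lemma cLaur_bdd_neg (e : ℤ) (he : e < 0) : LBdd (cLaur e) (-e - 1) := by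
  rw [cLaur, qInt, if_neg (by omega)]
  have hsum : LBdd (∑ i ∈ Finset.range (-e).toNat, (T (i : ℤ) : LaurentPolynomial ℤ)) (-e - 1) := by
    refine LBdd.finsum _ _ _ fun i hi => (LBdd.T (i : ℤ)).mono ?_
    rw [Finset.mem_range] at hi; omega
  have h2 := (LBdd.T e).mul hsum
  rw [show e + (-e - 1) = (-1 : ℤ) by ring] at h2
  have h3 := (LBdd.T (-e)).mul h2.neg
  rw [show (-e) + (-1) = -e - 1 by ring] at h3
  exact h3

lemma factor_eq (e : ℤ) :
    (Polynomial.C (qInt e) + Polynomial.C (T e) * Polynomial.X :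
      Polynomial (LaurentPolynomial ℤ)) =
    Polynomial.C (T e) * (Polynomial.X + Polynomial.C (cLaur e)) := by
  rw [mul_add, ← Polynomial.C_mul, cLaur, ← mul_assoc, ← T_add, add_neg_cancel, T_zero,
    one_mul, add_comm]

lemma summand_coeff (m s mj k : ℕ) (hk : k ≤ m) :
    (Polynomial.C (T (mj : ℤ) : LaurentPolynomial ℤ) * ∏ i ∈ Finset.Icc 1 m,
      (Polynomial.C (qInt ((i : ℤ) - s)) + Polynomial.C (T ((i : ℤ) - s)) * Polynomial.X)).coeff k
    = T ((mj : ℤ) + ∑ i ∈ Finset.Icc 1 m, ((i : ℤ) - s)) *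
      ∑ t ∈ (Finset.Icc 1 m).powersetCard (m - k), ∏ i ∈ t, cLaur ((i : ℤ) - s) := by
  simp_rw [factor_eq]
  rw [Finset.prod_mul_distrib,
    ← map_prod (Polynomial.C : LaurentPolynomial ℤ →+* _) (fun (i : ℕ) => T ((i : ℤ) - s))
      (Finset.Icc 1 m), ← T_sum,
    Polynomial.coeff_C_mul, Polynomial.coeff_C_mul, ← mul_assoc, ← T_add,
    Finset.prod_X_add_C_coeff _ _ (by rw [Nat.card_Icc]; omega), Nat.card_Icc]
  norm_num

lemma cLaur_bdd (s i : ℕ) :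
    LBdd (cLaur ((i : ℤ) - s)) (if i < s then (s : ℤ) - i - 1 else -1) := by
  rcases lt_trichotomy i s with h | h | h
  · rw [if_pos h]
    have := cLaur_bdd_neg ((i : ℤ) - s) (by omega)
    rwa [show -((i : ℤ) - s) - 1 = (s : ℤ) - i - 1 by ring] at this
  · subst h
    rw [if_neg (by omega), sub_self, cLaur_zero]
    exact LBdd.zero _
  · rw [if_neg (by omega)]
    exact cLaur_bdd_pos _ (by omega)

lemma gauss_Icc (m : ℕ) : (∑ i ∈ Finset.Icc 1 m, (i : ℤ)) * 2 = m * (m + 1) := by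
  induction m with
  | zero => simp
  | succ n ih =>
    rw [Finset.sum_Icc_succ_top (by omega)]
    push_cast
    push_cast at ih
    linarith

lemma gauss_G (m s : ℕ) (hs : s ≤ m) :
    (∑ i ∈ Finset.Icc 1 m, (if i < s then (s : ℤ) - i else 0)) * 2 = s * (s - 1) := by
  rw [← Finset.sum_filter]
  have hfil : (Finset.Icc 1 m).filter (fun i => i < s) = Finset.Icc 1 (s - 1) := by
    ext i
    simp only [Finset.mem_filter, Finset.mem_Icc]
    omega
  rw [hfil, Finset.sum_sub_distrib, Finset.sum_const, Nat.card_Icc, nsmul_eq_mul, sub_mul,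
    gauss_Icc (s - 1)]
  rcases Nat.eq_zero_or_pos s with h | h
  · subst h; simp
  · have h1 : ((s - 1 + 1 - 1 : ℕ) : ℤ) = (s : ℤ) - 1 := by omega
    have h2 : ((s - 1 : ℕ) : ℤ) = (s : ℤ) - 1 := by omega
    rw [h1, h2]; ring

lemma coeff_bdd (m s mj k : ℕ) (hk : k ≤ m) :
    LBdd ((Polynomial.C (T (mj : ℤ) : LaurentPolynomial ℤ) * ∏ i ∈ Finset.Icc 1 m,
      (Polynomial.C (qInt ((i : ℤ) - s)) + Polynomial.C (T ((i : ℤ) - s)) * Polynomial.X)).coeff k)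
      (((mj : ℤ) + ∑ i ∈ Finset.Icc 1 m, ((i : ℤ) - s)) + (((k : ℤ) - m) +
        ∑ i ∈ Finset.Icc 1 m, (if i < s then (s : ℤ) - i else 0))) := by
  rw [summand_coeff m s mj k hk]
  refine (LBdd.T _).mul (LBdd.finsum _ _ _ fun t ht => ?_)
  obtain ⟨hsub, hcard⟩ := Finset.mem_powersetCard.mp ht
  refine (LBdd.prod t _ (fun i => if i < s then (s : ℤ) - i - 1 else -1)
    (fun i _ => cLaur_bdd s i)).mono ?_
  have h1 : ∑ i ∈ t, (if i < s then (s : ℤ) - i - 1 else -1)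
      = -(t.card : ℤ) + ∑ i ∈ t, (if i < s then (s : ℤ) - i else 0) := by
    rw [Finset.sum_congr rfl (fun i (_ : i ∈ t) => show (if i < s then (s : ℤ) - i - 1 else -1)
        = -1 + (if i < s then (s : ℤ) - i else 0) from by split_ifs <;> ring),
      Finset.sum_add_distrib, Finset.sum_const, nsmul_eq_mul]
    ring
  have h2 : ∑ i ∈ t, (if i < s then (s : ℤ) - i else 0)
      ≤ ∑ i ∈ Finset.Icc 1 m, (if i < s then (s : ℤ) - i else 0) := by
    refine Finset.sum_le_sum_of_subset_of_nonneg hsub fun i _ _ => ?_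
    split_ifs with h
    · omega
    · exact le_refl 0
  have h3 : -(t.card : ℤ) ≤ (k : ℤ) - m := by omega
  linarith

lemma sum_c_bdd_id (m k : ℕ) (hk : k ≤ m) :
    LBdd (∑ t ∈ (Finset.Icc 1 m).powersetCard (m - k), ∏ i ∈ t, cLaur ((i : ℤ) - (0 : ℕ)))
      ((k : ℤ) - m) ∧
    (∑ t ∈ (Finset.Icc 1 m).powersetCard (m - k), ∏ i ∈ t, cLaur ((i : ℤ) - (0 : ℕ))).coeff
      ((k : ℤ) - m) = (m.choose (m - k) : ℤ) := by
  have key : ∀ t ∈ (Finset.Icc 1 m).powersetCard (m - k),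
      LBdd (∏ i ∈ t, cLaur ((i : ℤ) - (0 : ℕ))) ((k : ℤ) - m) ∧
      (∏ i ∈ t, cLaur ((i : ℤ) - (0 : ℕ))).coeff ((k : ℤ) - m) = 1 := by
    intro t ht
    obtain ⟨hsub, hcard⟩ := Finset.mem_powersetCard.mp ht
    have hpos : ∀ i ∈ t, (0 : ℤ) < (i : ℤ) - (0 : ℕ) := by
      intro i hi
      have := Finset.mem_Icc.mp (hsub hi)
      push_cast
      omega
    have hbdd : ∀ i ∈ t, LBdd (cLaur ((i : ℤ) - (0 : ℕ))) (-1) :=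
      fun i hi => cLaur_bdd_pos _ (hpos i hi)
    have hsumexp : ∑ _i ∈ t, (-1 : ℤ) = (k : ℤ) - m := by
      rw [Finset.sum_const, nsmul_eq_mul, hcard]
      omega
    constructor
    · have := LBdd.prod t _ (fun _ => (-1 : ℤ)) hbdd
      rwa [hsumexp] at this
    · have := prod_apply_top t _ (fun _ => (-1 : ℤ)) hbdd
      rw [hsumexp] at this
      rw [this]
      exact Finset.prod_eq_one fun i hi => cLaur_top_pos _ (hpos i hi)
  constructor
  · exact LBdd.finsum _ _ _ fun t ht => (key t ht).1
  · rw [AddMonoidAlgebra.coeff_sum, Finsupp.finset_sum_apply]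
    rw [Finset.sum_congr rfl fun t ht => (key t ht).2, Finset.sum_const, nsmul_eq_mul, mul_one,
      Finset.card_powersetCard, Nat.card_Icc]
    norm_num

lemma coeff_id_top (m k : ℕ) (hk : k ≤ m) :
    ((Polynomial.C (T ((0 : ℕ) : ℤ) : LaurentPolynomial ℤ) * ∏ i ∈ Finset.Icc 1 m,
      (Polynomial.C (qInt ((i : ℤ) - (0 : ℕ))) +
        Polynomial.C (T ((i : ℤ) - (0 : ℕ))) * Polynomial.X)).coeff k).coeff
      ((((0 : ℕ) : ℤ) + ∑ i ∈ Finset.Icc 1 m, ((i : ℤ) - (0 : ℕ))) + ((k : ℤ) - m))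
      = (m.choose (m - k) : ℤ) := by
  rw [summand_coeff m 0 0 k hk]
  obtain ⟨hb, hv⟩ := sum_c_bdd_id m k hk
  rw [mul_apply_top (LBdd.T _) hb, hv, T_apply, if_pos rfl, one_mul]

lemma sum_bound (A : Finset ℕ) : ∀ M : ℕ, (∀ a ∈ A, a < M) →
    2 * (∑ a ∈ A, (a : ℤ)) ≤ 2 * A.card * M - A.card ^ 2 - A.card := by
  induction A using Finset.induction_on_max with
  | empty => simp
  | insert a A ha ih =>
    intro M hM
    have hnotmem : a ∉ A := fun h => lt_irrefl a (ha a h)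
    rw [Finset.sum_insert hnotmem, Finset.card_insert_of_notMem hnotmem]
    have h1 := ih a ha
    have h2 : a < M := hM a (Finset.mem_insert_self a A)
    have h3 : (0 : ℤ) ≤ ((M : ℤ) - 1 - a) * ((A.card : ℤ) + 1) :=
      mul_nonneg (by omega) (by positivity)
    push_cast
    push_cast at h1
    nlinarith

lemma DesSet_one (m : ℕ) : DesSet m (1 : Equiv.Perm (Fin m)) = ∅ := by
  rw [DesSet, Finset.filter_eq_empty_iff]
  intro i hi
  rw [Finset.mem_Ico] at hi
  rw [wordAt, wordAt, dif_pos (show i + 1 - 1 < m by omega), dif_pos (show i - 1 < m by omega)]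
  simp only [Equiv.Perm.one_apply]
  omega

lemma desNum_one (m : ℕ) : desNum m (1 : Equiv.Perm (Fin m)) = 0 := by
  rw [desNum, DesSet_one]; rfl

lemma majIdx_one (m : ℕ) : majIdx m (1 : Equiv.Perm (Fin m)) = 0 := by
  rw [majIdx, DesSet_one]; rfl

lemma desNum_le (m : ℕ) (π : Equiv.Perm (Fin m)) : desNum m π ≤ m - 1 := by
  have := Finset.card_filter_le (Finset.Ico 1 m) (fun i => wordAt m π (i + 1) < wordAt m π i)
  rw [Nat.card_Ico] at this
  exact this

lemma majIdx_bound (m : ℕ) (π : Equiv.Perm (Fin m)) :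
    2 * (majIdx m π : ℤ) ≤ 2 * (desNum m π) * m - (desNum m π : ℤ) ^ 2 - desNum m π := by
  have hsub : ∀ a ∈ DesSet m π, a < m := by
    intro a ha
    have := (Finset.mem_Ico.mp (Finset.mem_of_mem_filter a ha)).2
    exact this
  have := sum_bound (DesSet m π) m hsub
  rw [majIdx, desNum]
  push_cast
  push_cast at this
  linarith

lemma eq_one_of_desNum_zero (m : ℕ) (π : Equiv.Perm (Fin m)) (h : desNum m π = 0) :
    π = 1 := by
  have hD : DesSet m π = ∅ := Finset.card_eq_zero.mp h
  have hmono : StrictMono ⇑π := by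
    rcases Nat.eq_zero_or_pos m with hm0 | hm0
    · subst hm0; intro a; exact a.elim0
    obtain ⟨n, rfl⟩ : ∃ n, m = n + 1 := ⟨m - 1, by omega⟩
    rw [Fin.strictMono_iff_lt_succ]
    intro i
    by_contra hlt
    have hne : π i.succ ≠ π (Fin.castSucc i) := fun hh =>
      absurd (π.injective hh) (Fin.ne_of_lt (Fin.castSucc_lt_succ (i := i))).symm
    have hgt : π i.succ < π (Fin.castSucc i) := lt_of_le_of_ne (not_lt.mp hlt) hne
    have hmem : (i : ℕ) + 1 ∈ DesSet (n + 1) π := by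
      rw [DesSet, Finset.mem_filter, Finset.mem_Ico]
      refine ⟨⟨by omega, by omega⟩, ?_⟩
      rw [wordAt, wordAt, dif_pos (show (i : ℕ) + 1 + 1 - 1 < n + 1 by omega),
        dif_pos (show (i : ℕ) + 1 - 1 < n + 1 by omega)]
      have e1 : (⟨(i : ℕ) + 1 + 1 - 1, by omega⟩ : Fin (n + 1)) = i.succ := by
        apply Fin.ext; simp
      have e2 : (⟨(i : ℕ) + 1 - 1, by omega⟩ : Fin (n + 1)) = Fin.castSucc i := by
        apply Fin.ext; simp
      rw [e1, e2]
      have := (Fin.lt_iff_val_lt_val.mp hgt)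
      omega
    rw [hD] at hmem
    exact absurd hmem (Finset.notMem_empty _)
  have hwf : WellFoundedLT (Fin m) := inferInstance
  have hrange : Set.range ⇑π = Set.range (id : Fin m → Fin m) := by
    rw [Set.range_id, π.surjective.range_eq]
  have : ⇑π = id :=
    (@StrictMono.range_inj (Fin m) (Fin m) _ _ hwf _ _ hmono strictMono_id).1 hrange
  exact Equiv.ext fun x => congrFun this x

lemma isLinExt_one (m : ℕ) (P : PartialOrder (Fin m)) (hnat : NatLabeled m P) :
    IsLinExt m P (1 : Equiv.Perm (Fin m)) := by
  intro i j h
  simp only [Equiv.Perm.one_apply] at h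
  exact hnat i j h

theorem statement13 (m : ℕ) (hm : 1 ≤ m) (P : PartialOrder (Fin m))
    (hnat : NatLabeled m P)
    (k : ℕ) (hk1 : 1 ≤ k) (hk2 : k ≤ m) :
    (Fpoly m P).coeff k ≠ 0 ∧
    IsGreatest {i : ℤ | ((Fpoly m P).coeff k).coeff i ≠ 0} ((m * (m - 1) / 2 + k : ℕ) : ℤ) := by
  have hSI : (∑ i ∈ Finset.Icc 1 m, (i : ℤ)) * 2 = m * (m + 1) := gauss_Icc m
  set SI : ℤ := ∑ i ∈ Finset.Icc 1 m, (i : ℤ) with hSIdef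
  set top : ℤ := ((m * (m - 1) / 2 + k : ℕ) : ℤ) with htopdef
  have hevens : (m * (m - 1) / 2) * 2 = m * (m - 1) := by
    have h2 : Even (m * (m - 1)) := by
      have h3 : m - 1 + 1 = m := by omega
      have h4 := Nat.even_mul_succ_self (m - 1)
      rw [h3] at h4
      rwa [Nat.mul_comm] at h4
    exact Nat.div_mul_cancel h2.two_dvd
  have hN : (m * (m - 1) / 2 + k) * 2 = m * (m - 1) + 2 * k := by omega
  have htop2 : top * 2 = (m : ℤ) * ((m : ℤ) - 1) + 2 * k := by
    rw [htopdef,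
      show ((m * (m - 1) / 2 + k : ℕ) : ℤ) * 2 = (((m * (m - 1) / 2 + k) * 2 : ℕ) : ℤ) by
        push_cast; ring, hN]
    have hm1 : ((m - 1 : ℕ) : ℤ) = (m : ℤ) - 1 := by omega
    push_cast [hm1]
    ring
  -- abbreviations
  set L := Finset.univ.filter (fun π : Equiv.Perm (Fin m) => IsLinExt m P π) with hLdef
  have hL1 : (1 : Equiv.Perm (Fin m)) ∈ L := by
    rw [hLdef, Finset.mem_filter]
    exact ⟨Finset.mem_univ _, isLinExt_one m P hnat⟩
  have hco : (Fpoly m P).coeff k = ∑ π ∈ L,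
      ((Polynomial.C (T (majIdx m π : ℤ) : LaurentPolynomial ℤ) * ∏ i ∈ Finset.Icc 1 m,
        (Polynomial.C (qInt ((i : ℤ) - desNum m π)) +
          Polynomial.C (T ((i : ℤ) - desNum m π)) * Polynomial.X)).coeff k) := by
    rw [Fpoly, Polynomial.finset_sum_coeff]
  -- bound for each non-identity linear extension
  have hBle : ∀ π : Equiv.Perm (Fin m), π ≠ 1 →
      (((majIdx m π : ℤ) + ∑ i ∈ Finset.Icc 1 m, ((i : ℤ) - desNum m π)) + (((k : ℤ) - m) +
        ∑ i ∈ Finset.Icc 1 m, (if i < desNum m π then (desNum m π : ℤ) - i else 0)))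
      ≤ top - 1 := by
    intro π hπ
    set s := desNum m π with hsdef
    have hs1 : 1 ≤ s := by
      rcases Nat.eq_zero_or_pos s with h0 | h0
      · exact absurd (eq_one_of_desNum_zero m π h0) hπ
      · exact h0
    have hs2 : s ≤ m - 1 := desNum_le m π
    have hmaj := majIdx_bound m π
    rw [← hsdef] at hmaj
    have hSE : ∑ i ∈ Finset.Icc 1 m, ((i : ℤ) - s) = SI - (m : ℤ) * s := by
      rw [hSIdef, Finset.sum_sub_distrib, Finset.sum_const, Nat.card_Icc, nsmul_eq_mul]
      have : ((m + 1 - 1 : ℕ) : ℤ) = (m : ℤ) := by omega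
      rw [this]
    have hG := gauss_G m s (by omega)
    rw [hSE]
    set G : ℤ := ∑ i ∈ Finset.Icc 1 m, (if i < s then (s : ℤ) - i else 0) with hGdef
    have hsm : (s : ℤ) ≤ (m : ℤ) - 1 := by omega
    nlinarith [hmaj, hG, hSI, htop2, hs1]
  -- value at top
  have hexp0 : (((0 : ℕ) : ℤ) + ∑ i ∈ Finset.Icc 1 m, ((i : ℤ) - ((0 : ℕ) : ℤ))) +
      ((k : ℤ) - m) = top := by
    have hSE0 : ∑ i ∈ Finset.Icc 1 m, ((i : ℤ) - ((0 : ℕ) : ℤ)) = SI := by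
      rw [hSIdef]
      exact Finset.sum_congr rfl fun i _ => by push_cast; ring
    rw [hSE0]
    push_cast
    linarith
  have hid_top : ((Polynomial.C (T (majIdx m 1 : ℤ) : LaurentPolynomial ℤ) *
      ∏ i ∈ Finset.Icc 1 m,
        (Polynomial.C (qInt ((i : ℤ) - desNum m 1)) +
          Polynomial.C (T ((i : ℤ) - desNum m 1)) * Polynomial.X)).coeff k).coeff top
      = (m.choose (m - k) : ℤ) := by
    rw [majIdx_one, desNum_one, ← hexp0]
    exact coeff_id_top m k hk2
  have hid_bdd : LBdd ((Polynomial.C (T (majIdx m 1 : ℤ) : LaurentPolynomial ℤ) *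
      ∏ i ∈ Finset.Icc 1 m,
        (Polynomial.C (qInt ((i : ℤ) - desNum m 1)) +
          Polynomial.C (T ((i : ℤ) - desNum m 1)) * Polynomial.X)).coeff k) top := by
    have := coeff_bdd m (desNum m 1) (majIdx m 1) k hk2
    refine this.mono ?_
    rw [majIdx_one, desNum_one]
    have hG0 : ∑ i ∈ Finset.Icc 1 m, (if i < (0 : ℕ) then ((0 : ℕ) : ℤ) - i else 0) = 0 :=
      Finset.sum_eq_zero fun i _ => if_neg (Nat.not_lt_zero i)
    rw [hG0, ← hexp0]
    push_cast
    linarith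
  have hne_bdd : ∀ π : Equiv.Perm (Fin m), π ≠ 1 →
      LBdd ((Polynomial.C (T (majIdx m π : ℤ) : LaurentPolynomial ℤ) * ∏ i ∈ Finset.Icc 1 m,
        (Polynomial.C (qInt ((i : ℤ) - desNum m π)) +
          Polynomial.C (T ((i : ℤ) - desNum m π)) * Polynomial.X)).coeff k) (top - 1) :=
    fun π hπ => (coeff_bdd m (desNum m π) (majIdx m π) k hk2).mono (hBle π hπ)
  have htopval : ((Fpoly m P).coeff k).coeff top = (m.choose (m - k) : ℤ) := by
    rw [hco, AddMonoidAlgebra.coeff_sum, Finsupp.finset_sum_apply, ← Finset.add_sum_erase L _ hL1, hid_top]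
    rw [Finset.sum_eq_zero fun π hπ => hne_bdd π (Finset.ne_of_mem_erase hπ) top (by omega),
      add_zero]
  have hhi : ∀ j : ℤ, top < j → ((Fpoly m P).coeff k).coeff j = 0 := by
    intro j hj
    rw [hco, AddMonoidAlgebra.coeff_sum, Finsupp.finset_sum_apply]
    refine Finset.sum_eq_zero fun π hπ => ?_
    by_cases h1 : π = 1
    · subst h1
      exact hid_bdd j hj
    · exact hne_bdd π h1 j (by omega)
  have hchoose : (m.choose (m - k) : ℤ) ≠ 0 := by
    have := Nat.choose_pos (show m - k ≤ m by omega)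
    omega
  refine ⟨?_, ?_, ?_⟩
  · intro h0
    rw [h0] at htopval
    exact hchoose htopval.symm
  · show ((Fpoly m P).coeff k).coeff top ≠ 0
    rw [htopval]; exact hchoose
  · intro j hj
    by_contra hcon
    exact hj (hhi j (by omega))
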